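/- For parameters h > 0, b > 0, u, v ∈ ℝ, the matrix R of the 1-D TRSW system satisfies A · R = R · Λ where Λ = diag(v − √(bh), v, v, v + √(bh)). -/

import Mathlib

noncomputable def trswA (h u v b : ℝ) : Matrix (Fin 4) (Fin 4) ℝ :=
  !![0, 0, 1, 0;
     -(u * v), v, u, 0;
     b * h / 2 - v ^ 2, 0, 2 * v, h / 2;
     -(b * v), 0, b, v]

noncomputable def trswR (h u v b : ℝ) : Matrix (Fin 4) (Fin 4) ℝ :=
  (1 / b) •
  !![1, -1, 0, 1;
     u, 0, b, u;
     v - Real.sqrt (b * h), -v, 0, v + Real.sqrt (b * h);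
     b, b, 0, b]

theorem trswA_diag (h u v b : ℝ) (hh : 0 < h) (hb : 0 < b) :
    trswA h u v b * trswR h u v b =
      trswR h u v b *
        Matrix.diagonal ![v - Real.sqrt (b * h), v, v, v + Real.sqrt (b * h)] := by
  have hs : Real.sqrt (b * h) * Real.sqrt (b * h) = b * h :=
    Real.mul_self_sqrt (by positivity)
  have hs2 : Real.sqrt b * Real.sqrt h * (Real.sqrt b * Real.sqrt h) = b * h := by
    rw [mul_mul_mul_comm, Real.mul_self_sqrt hb.le, Real.mul_self_sqrt hh.le]
  unfold trswA trswR
  ext i j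
  fin_cases i <;> fin_cases j <;>
    simp [Matrix.mul_apply, Fin.sum_univ_succ, Matrix.diagonal] <;> field_simp
  all_goals try ring
  all_goals linear_combination (-2) * hs
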